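/- Let μ be an atomless probability measure on ℝ with cumulative distribution function F, let k ≥ 1 be an integer, and let ν be the probability measure on ℝ whose cumulative distribution function is F^{1/k}. Then ν is absolutely continuous with respect to μ with density x ↦ (1/k)·F(x)^{(1/k) − 1} (the density may be set to 0 on the set {x : F(x) = 0}, which is μ-null): for every Borel set A ⊆ ℝ, ν(A) = ∫_A (1/k) F(x)^{(1/k) − 1} dμ(x). -/

import Mathlib

open MeasureTheory
open scoped ENNReal

/-- The cumulative distribution function of a measure on `ℝ`. -/
noncomputable def cdf' (μ : Measure ℝ) : ℝ → ℝ := fun x => (μ (Set.Iic x)).toReal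

section Aux

variable (μ : Measure ℝ) [IsProbabilityMeasure μ]

lemma cdf'_eq_cdf : cdf' μ = ProbabilityTheory.cdf μ := by
  funext x; rw [ProbabilityTheory.cdf_eq_real]; rfl

lemma cdf'_mono : Monotone (cdf' μ) := by
  rw [cdf'_eq_cdf]; exact ProbabilityTheory.monotone_cdf _

lemma cdf'_measurable : Measurable (cdf' μ) := (cdf'_mono μ).measurable

lemma ofReal_cdf' (x : ℝ) : ENNReal.ofReal (cdf' μ x) = μ (Set.Iic x) := by
  rw [cdf'_eq_cdf]; exact ProbabilityTheory.ofReal_cdf μ x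

lemma cdf'_nonneg (x : ℝ) : 0 ≤ cdf' μ x := ENNReal.toReal_nonneg

lemma cdf'_le_one (x : ℝ) : cdf' μ x ≤ 1 := by
  rw [cdf'_eq_cdf]; exact ProbabilityTheory.cdf_le_one μ x

lemma tendsto_cdf'_atBot : Filter.Tendsto (cdf' μ) Filter.atBot (nhds 0) := by
  rw [cdf'_eq_cdf]; exact ProbabilityTheory.tendsto_cdf_atBot μ

lemma tendsto_cdf'_atTop : Filter.Tendsto (cdf' μ) Filter.atTop (nhds 1) := by
  rw [cdf'_eq_cdf]; exact ProbabilityTheory.tendsto_cdf_atTop μ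

/-- The key computation: `μ {t | F t ≤ y} = min (ofReal y) 1` for atomless `μ`. -/
lemma measure_cdf'_le [NullSingletonClass μ] (y : ℝ) :
    μ {t | cdf' μ t ≤ y} = min (ENNReal.ofReal y) 1 := by
  set F := cdf' μ with hF
  set S := {t | F t ≤ y} with hS
  by_cases hne : S.Nonempty
  · have hy0 : 0 ≤ y := le_trans (cdf'_nonneg μ hne.choose) hne.choose_spec
    by_cases hbdd : BddAbove S
    · set s := sSup S with hs
      have hmem : ∀ t, t < s → t ∈ S := by
        intro t ht
        obtain ⟨t', ht', htt'⟩ := exists_lt_of_lt_csSup hne ht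
        exact le_trans (cdf'_mono μ htt'.le) ht'
      have hSub : S ⊆ Set.Iic s := fun t ht => le_csSup hbdd ht
      -- μ (Iio s) ≤ ofReal y
      have hIio : Set.Iio s = ⋃ n : ℕ, Set.Iic (s - ((n : ℝ) + 1)⁻¹) := by
        ext t
        simp only [Set.mem_Iio, Set.mem_iUnion, Set.mem_Iic]
        constructor
        · intro ht
          obtain ⟨n, hn⟩ := exists_nat_one_div_lt (sub_pos.2 ht)
          exact ⟨n, by rw [one_div] at hn; linarith⟩
        · rintro ⟨n, hn⟩
          have : (0 : ℝ) < ((n : ℝ) + 1)⁻¹ := by positivity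
          linarith
      have hIio_le : μ (Set.Iio s) ≤ ENNReal.ofReal y := by
        rw [hIio, Directed.measure_iUnion]
        · refine iSup_le fun n => ?_
          have h1 : s - ((n : ℝ) + 1)⁻¹ < s := by
            have : (0 : ℝ) < ((n : ℝ) + 1)⁻¹ := by positivity
            linarith
          rw [← ofReal_cdf' μ]
          exact ENNReal.ofReal_le_ofReal (hmem _ h1)
        · exact (monotone_nat_of_le_succ fun n => Set.Iic_subset_Iic.2 (by
            have h2 : ((n : ℝ) + 1 + 1)⁻¹ ≤ ((n : ℝ) + 1)⁻¹ := by
              apply inv_anti₀ <;> [positivity; linarith]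
            push_cast
            linarith)).directed_le
      have hFs_le : F s ≤ y := by
        have h1 : μ (Set.Iic s) = μ (Set.Iio s) := (measure_congr (Iio_ae_eq_Iic (a := s))).symm
        have : ENNReal.ofReal (F s) ≤ ENNReal.ofReal y := by
          rw [ofReal_cdf' μ, h1]; exact hIio_le
        have := ENNReal.toReal_mono ENNReal.ofReal_ne_top this
        rwa [ENNReal.toReal_ofReal (cdf'_nonneg μ s), ENNReal.toReal_ofReal hy0] at this
      have hFs_ge : y ≤ F s := by
        have hrc : ContinuousWithinAt F (Set.Ici s) s := by
          rw [hF, cdf'_eq_cdf]; exact (ProbabilityTheory.cdf μ).right_continuous s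
        have htend : Filter.Tendsto F (nhdsWithin s (Set.Ioi s)) (nhds (F s)) :=
          hrc.tendsto.mono_left (nhdsWithin_mono s Set.Ioi_subset_Ici_self)
        have hev : ∀ᶠ t in nhdsWithin s (Set.Ioi s), y ≤ F t := by
          filter_upwards [self_mem_nhdsWithin] with t ht
          by_contra h
          exact (not_le.2 (Set.mem_Ioi.1 ht)) (Set.mem_Iic.1 (hSub (le_of_not_ge h)))
        exact ge_of_tendsto htend hev
      have hFs : F s = y := le_antisymm hFs_le hFs_ge
      have hμS : μ S = ENNReal.ofReal y := by
        refine le_antisymm ?_ ?_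
        · calc μ S ≤ μ (Set.Iic s) := measure_mono hSub
            _ = ENNReal.ofReal (F s) := (ofReal_cdf' μ s).symm
            _ = ENNReal.ofReal y := by rw [hFs]
        · calc ENNReal.ofReal y = μ (Set.Iic s) := by
                rw [← ofReal_cdf' μ s]; exact congrArg ENNReal.ofReal hFs.symm
            _ = μ (Set.Iio s) := (measure_congr (Iio_ae_eq_Iic (a := s))).symm
            _ ≤ μ S := measure_mono fun t ht => hmem t ht
      rw [hμS, min_eq_left]
      rw [← hFs]
      calc ENNReal.ofReal (F s) ≤ ENNReal.ofReal 1 := ENNReal.ofReal_le_ofReal (cdf'_le_one μ s)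
        _ = 1 := ENNReal.ofReal_one
    · -- S unbounded above: S = univ and y ≥ 1
      have hSuniv : S = Set.univ := by
        ext t
        simp only [Set.mem_univ, iff_true]
        obtain ⟨t', ht', htt'⟩ := not_bddAbove_iff.1 hbdd t
        exact le_trans (cdf'_mono μ htt'.le) ht'
      have hy1 : 1 ≤ y := by
        refine le_of_tendsto (tendsto_cdf'_atTop μ) ?_
        filter_upwards with t
        have : t ∈ S := hSuniv ▸ Set.mem_univ t
        exact this
      rw [hSuniv, measure_univ, min_eq_right (ENNReal.one_le_ofReal.2 hy1)]
  · -- S empty : y ≤ 0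
    rw [Set.not_nonempty_iff_eq_empty.1 hne, measure_empty]
    have hy0 : y ≤ 0 := by
      refine ge_of_tendsto (tendsto_cdf'_atBot μ) ?_
      filter_upwards with t
      by_contra h
      exact hne ⟨t, le_of_not_ge h⟩
    rw [min_eq_left (le_trans (by simp [ENNReal.ofReal_eq_zero.2 hy0]) zero_le_one)]
    simp [ENNReal.ofReal_eq_zero.2 hy0]

/-- Probability integral transform: for atomless `μ`, the pushforward of `μ` under its cdf
is the uniform distribution on `(0, 1]`. -/
lemma map_cdf' [NullSingletonClass μ] : μ.map (cdf' μ) = volume.restrict (Set.Ioc 0 1) := by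
  haveI : IsProbabilityMeasure (μ.map (cdf' μ)) :=
    Measure.isProbabilityMeasure_map (cdf'_measurable μ).aemeasurable
  refine Measure.ext_of_Iic _ _ fun y => ?_
  rw [Measure.map_apply (cdf'_measurable μ) measurableSet_Iic]
  have h1 : cdf' μ ⁻¹' (Set.Iic y) = {t | cdf' μ t ≤ y} := rfl
  rw [h1, measure_cdf'_le μ y, Measure.restrict_apply measurableSet_Iic]
  have h2 : Set.Iic y ∩ Set.Ioc 0 1 = Set.Ioc 0 (min y 1) := by
    ext u
    simp only [Set.mem_inter_iff, Set.mem_Iic, Set.mem_Ioc, le_min_iff]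
    tauto
  rw [h2, Real.volume_Ioc, sub_zero]
  rcases le_total y 1 with h | h
  · rw [min_eq_left h, min_eq_left]
    calc ENNReal.ofReal y ≤ ENNReal.ofReal 1 := ENNReal.ofReal_le_ofReal h
      _ = 1 := ENNReal.ofReal_one
  · rw [min_eq_right h, ENNReal.ofReal_one, min_eq_right (ENNReal.one_le_ofReal.2 h)]

lemma iic_ae_eq_cdf'_le [NullSingletonClass μ] (x : ℝ) :
    (Set.Iic x : Set ℝ) =ᵐ[μ] {t | cdf' μ t ≤ cdf' μ x} := by
  have hsub : Set.Iic x ⊆ {t | cdf' μ t ≤ cdf' μ x} := fun t ht => cdf'_mono μ ht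
  have hμ : μ {t | cdf' μ t ≤ cdf' μ x} = μ (Set.Iic x) := by
    rw [measure_cdf'_le μ, ← ofReal_cdf' μ x, min_eq_left]
    calc ENNReal.ofReal (cdf' μ x) ≤ ENNReal.ofReal 1 :=
          ENNReal.ofReal_le_ofReal (cdf'_le_one μ x)
      _ = 1 := ENNReal.ofReal_one
  rw [MeasureTheory.ae_eq_set]
  constructor
  · rw [Set.diff_eq_empty.2 hsub]; exact measure_empty
  · rw [measure_diff hsub nullMeasurableSet_Iic (measure_ne_top μ _), hμ, tsub_self]

/-- The key integral identity. -/
lemma lintegral_density [NullSingletonClass μ] (k : ℕ) (hk : 1 ≤ k) (x : ℝ) :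
    ∫⁻ t in Set.Iic x, ENNReal.ofReal ((1 / (k : ℝ)) * cdf' μ t ^ ((1 : ℝ) / k - 1)) ∂μ
      = ENNReal.ofReal (cdf' μ x ^ ((1 : ℝ) / k)) := by
  have hk0 : (0 : ℝ) < k := by exact_mod_cast hk
  set r : ℝ := (1 : ℝ) / k - 1 with hr_def
  have hr : -1 < r := by
    have : (0 : ℝ) < 1 / k := by positivity
    rw [hr_def]; linarith
  set c : ℝ := cdf' μ x with hc
  have hc0 : 0 ≤ c := cdf'_nonneg μ x
  have hc1 : c ≤ 1 := cdf'_le_one μ x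
  have hg : Measurable fun u : ℝ => ENNReal.ofReal ((1 / (k : ℝ)) * u ^ r) := by
    apply Measurable.ennreal_ofReal
    exact (measurable_id.pow measurable_const).const_mul _
  calc ∫⁻ t in Set.Iic x, ENNReal.ofReal ((1 / (k : ℝ)) * cdf' μ t ^ r) ∂μ
      = ∫⁻ t in {t | cdf' μ t ≤ c}, ENNReal.ofReal ((1 / (k : ℝ)) * cdf' μ t ^ r) ∂μ :=
        setLIntegral_congr (iic_ae_eq_cdf'_le μ x)
    _ = ∫⁻ t in cdf' μ ⁻¹' Set.Iic c, ENNReal.ofReal ((1 / (k : ℝ)) * cdf' μ t ^ r) ∂μ := rfl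
    _ = ∫⁻ u in Set.Iic c, ENNReal.ofReal ((1 / (k : ℝ)) * u ^ r) ∂(μ.map (cdf' μ)) :=
        (setLIntegral_map measurableSet_Iic hg (cdf'_measurable μ)).symm
    _ = ∫⁻ u in Set.Iic c, ENNReal.ofReal ((1 / (k : ℝ)) * u ^ r)
          ∂(volume.restrict (Set.Ioc 0 1)) := by rw [map_cdf' μ]
    _ = ∫⁻ u in Set.Ioc 0 c, ENNReal.ofReal ((1 / (k : ℝ)) * u ^ r) := by
        rw [Measure.restrict_restrict measurableSet_Iic]
        have hset : Set.Iic c ∩ Set.Ioc 0 1 = Set.Ioc 0 c := by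
          ext u
          simp only [Set.mem_inter_iff, Set.mem_Iic, Set.mem_Ioc]
          constructor
          · rintro ⟨h1, h2, h3⟩; exact ⟨h2, h1⟩
          · rintro ⟨h1, h2⟩; exact ⟨h2, h1, le_trans h2 hc1⟩
        rw [hset]
    _ = ENNReal.ofReal (c ^ ((1 : ℝ) / k)) := by
        have hint : IntegrableOn (fun u : ℝ => (1 / (k : ℝ)) * u ^ r) (Set.Ioc 0 c) := by
          have h1 : IntervalIntegrable (fun u : ℝ => u ^ r) volume 0 c :=
            intervalIntegral.intervalIntegrable_rpow' hr
          rw [intervalIntegrable_iff_integrableOn_Ioc_of_le hc0] at h1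
          exact h1.const_mul _
        have hnn : 0 ≤ᵐ[volume.restrict (Set.Ioc 0 c)]
            fun u : ℝ => (1 / (k : ℝ)) * u ^ r := by
          rw [Filter.EventuallyLE, ae_restrict_iff' measurableSet_Ioc]
          filter_upwards with u hu
          have : (0:ℝ) ≤ u ^ r := Real.rpow_nonneg hu.1.le r
          positivity
        rw [← ofReal_integral_eq_lintegral_ofReal hint hnn]
        congr 1
        rw [← intervalIntegral.integral_of_le hc0, intervalIntegral.integral_const_mul,
          integral_rpow (Or.inl hr)]
        have hrk : r + 1 = 1 / (k : ℝ) := by simp [hr_def]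
        rw [hrk, Real.zero_rpow (by positivity : (1:ℝ)/k ≠ 0)]
        field_simp
        rw [sub_zero]

end Aux

/-- **Density of `μ^{1/k}` with respect to `μ`.**
If `μ` is an atomless probability measure on `ℝ` with distribution function `F`, `k ≥ 1`,
and `ν` is the probability measure with distribution function `F^{1/k}`, then `ν` is
absolutely continuous with respect to `μ` with density `x ↦ (1/k) F(x)^{1/k - 1}`:
for every Borel set `A`, `ν(A) = ∫_A (1/k) F(x)^{1/k - 1} dμ(x)`.
(The density vanishes on the `μ`-null set `{F = 0}` when `k ≥ 2`, by convention on `rpow`.) -/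
theorem kth_root_measure_withDensity (μ : Measure ℝ) [IsProbabilityMeasure μ] [NullSingletonClass μ]
    (k : ℕ) (hk : 1 ≤ k) (ν : Measure ℝ) [IsProbabilityMeasure ν]
    (hν : ∀ x : ℝ, cdf' ν x = cdf' μ x ^ ((1 : ℝ) / k)) :
    ∀ A : Set ℝ, MeasurableSet A →
      ν A = ∫⁻ x in A, ENNReal.ofReal ((1 / (k : ℝ)) * cdf' μ x ^ ((1 : ℝ) / k - 1)) ∂μ := by
  set g : ℝ → ℝ≥0∞ :=
    fun t => ENNReal.ofReal ((1 / (k : ℝ)) * cdf' μ t ^ ((1 : ℝ) / k - 1)) with hg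
  have key : ν = μ.withDensity g := by
    haveI hfin : IsFiniteMeasure (μ.withDensity g) := by
      constructor
      have huniv : (Set.univ : Set ℝ) = ⋃ n : ℕ, Set.Iic (n : ℝ) := by
        ext t
        simp only [Set.mem_univ, Set.mem_iUnion, Set.mem_Iic, true_iff]
        obtain ⟨n, hn⟩ := exists_nat_ge t
        exact ⟨n, hn⟩
      rw [huniv, Directed.measure_iUnion]
      · refine lt_of_le_of_lt (iSup_le fun n => ?_) ENNReal.one_lt_top
        rw [withDensity_apply _ measurableSet_Iic, lintegral_density μ k hk (n : ℝ)]
        calc ENNReal.ofReal (cdf' μ (n:ℝ) ^ ((1:ℝ)/k)) ≤ ENNReal.ofReal 1 := by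
              apply ENNReal.ofReal_le_ofReal
              exact Real.rpow_le_one (cdf'_nonneg μ _) (cdf'_le_one μ _) (by positivity)
          _ = 1 := ENNReal.ofReal_one
      · exact (monotone_nat_of_le_succ fun n =>
          Set.Iic_subset_Iic.2 (by exact_mod_cast Nat.le_succ n)).directed_le
    refine Measure.ext_of_Iic ν _ fun y => ?_
    rw [withDensity_apply _ measurableSet_Iic, lintegral_density μ k hk y,
      ← hν y, ofReal_cdf' ν y]
  intro A hA
  rw [key, withDensity_apply _ hA]
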